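/- Let Φ:C²→C² be defined by Φ(C)(u,v) = (1/3)C(3u,3v−2) for (u,v) ∈ [0,1/3]×[2/3,1], Φ(C)(u,v) = min(u−1/3, v) for (u,v) ∈ [2/3,1]×[0,2/3], and Φ(C)(u,v) = max(u+v−1,0) otherwise. Then for all 2-copulas C₁, C₂, d_∞(Φ(C₁), Φ(C₂)) = (1/3) d_∞(C₁, C₂); in particular Φ is injective and continuous. -/
import Mathlib


open Set

/-- A 2-copula on [0,1]². -/
def IsCopula2 (C : ℝ → ℝ → ℝ) : Prop :=
  (∀ u ∈ Set.Icc (0:ℝ) 1, ∀ v ∈ Set.Icc (0:ℝ) 1, C u v ∈ Set.Icc (0:ℝ) 1) ∧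
  (∀ u ∈ Set.Icc (0:ℝ) 1, C u 0 = 0 ∧ C 0 u = 0 ∧ C u 1 = u ∧ C 1 u = u) ∧
  (∀ u ∈ Set.Icc (0:ℝ) 1, ∀ u' ∈ Set.Icc (0:ℝ) 1, ∀ v ∈ Set.Icc (0:ℝ) 1, ∀ v' ∈ Set.Icc (0:ℝ) 1,
    u ≤ u' → v ≤ v' → 0 ≤ C u' v' - C u' v - C u v' + C u v)

/-- The W-ordinal sum map Φ placing a 1/3-rescaled copy of C in [0,1/3]×[2/3,1]. -/
noncomputable def Phi (C : ℝ → ℝ → ℝ) (u v : ℝ) : ℝ :=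
  if u ∈ Set.Icc (0:ℝ) (1/3) ∧ v ∈ Set.Icc (2/3 : ℝ) 1 then (1/3) * C (3*u) (3*v - 2)
  else if u ∈ Set.Icc (2/3 : ℝ) 1 ∧ v ∈ Set.Icc (0:ℝ) (2/3) then min (u - 1/3) v
  else max (u + v - 1) 0

/-- The sup distance d_∞ between two functions on [0,1]². -/
noncomputable def dsup (C C' : ℝ → ℝ → ℝ) : ℝ :=
  sSup {x | ∃ u ∈ Set.Icc (0:ℝ) 1, ∃ v ∈ Set.Icc (0:ℝ) 1, x = |C u v - C' u v|}

/-- Φ contracts the sup distance exactly by the factor 1/3; in particular it is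
injective (and continuous) on the space of 2-copulas. -/
theorem Phi_scaling (C₁ C₂ : ℝ → ℝ → ℝ) (h₁ : IsCopula2 C₁) (h₂ : IsCopula2 C₂) :
    dsup (Phi C₁) (Phi C₂) = (1/3) * dsup C₁ C₂ ∧
    ((∀ u ∈ Icc (0:ℝ) 1, ∀ v ∈ Icc (0:ℝ) 1, Phi C₁ u v = Phi C₂ u v) →
      ∀ u ∈ Icc (0:ℝ) 1, ∀ v ∈ Icc (0:ℝ) 1, C₁ u v = C₂ u v) := by
  constructor
  · unfold dsup
    set S := {x | ∃ u ∈ Set.Icc (0:ℝ) 1, ∃ v ∈ Set.Icc (0:ℝ) 1, x = |C₁ u v - C₂ u v|} with hS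
    have h00 : (0:ℝ) ∈ S := by
      refine ⟨0, by norm_num, 0, by norm_num, ?_⟩
      rw [(h₁.2.1 0 (by norm_num)).1, (h₂.2.1 0 (by norm_num)).1]; simp
    have hset : {x | ∃ u ∈ Set.Icc (0:ℝ) 1, ∃ v ∈ Set.Icc (0:ℝ) 1,
        x = |Phi C₁ u v - Phi C₂ u v|} = (fun x : ℝ => (1/3)*x) '' S := by
      ext x
      constructor
      · rintro ⟨u, hu, v, hv, rfl⟩
        unfold Phi
        split_ifs with h h'
        · refine ⟨|C₁ (3*u) (3*v-2) - C₂ (3*u) (3*v-2)|,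
            ⟨3*u, ⟨by linarith [h.1.1], by linarith [h.1.2]⟩,
             3*v-2, ⟨by linarith [h.2.1], by linarith [h.2.2]⟩, rfl⟩, ?_⟩
          rw [← mul_sub, abs_mul, show |(1/3:ℝ)| = 1/3 by norm_num]
        · exact ⟨0, h00, by simp⟩
        · exact ⟨0, h00, by simp⟩
      · rintro ⟨x, ⟨s, hs, t, ht, rfl⟩, rfl⟩
        refine ⟨s/3, ⟨by linarith [hs.1], by linarith [hs.2]⟩,
          (t+2)/3, ⟨by linarith [ht.1], by linarith [ht.2]⟩, ?_⟩
        have hc : (s/3) ∈ Set.Icc (0:ℝ) (1/3) ∧ (t+2)/3 ∈ Set.Icc (2/3:ℝ) 1 :=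
          ⟨⟨by linarith [hs.1], by linarith [hs.2]⟩, ⟨by linarith [ht.1], by linarith [ht.2]⟩⟩
        unfold Phi
        rw [if_pos hc, if_pos hc]
        have e1 : 3*(s/3) = s := by ring
        have e2 : 3*((t+2)/3) - 2 = t := by ring
        rw [e1, e2, ← mul_sub, abs_mul, show |(1/3:ℝ)| = 1/3 by norm_num]
    rw [hset]
    have hmono : Monotone (fun x : ℝ => (1/3)*x) := fun a b h => by dsimp; linarith
    have hne : S.Nonempty := ⟨0, h00⟩
    have hbdd : BddAbove S := by
      refine ⟨1, ?_⟩
      rintro x ⟨u, hu, v, hv, rfl⟩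
      obtain ⟨b11, b12⟩ := h₁.1 u hu v hv
      obtain ⟨b21, b22⟩ := h₂.1 u hu v hv
      rw [abs_le]
      constructor <;> linarith
    rw [← Monotone.map_csSup_of_continuousAt (by fun_prop) hmono hne hbdd]
  · intro h s hs t ht
    have hc : (s/3) ∈ Set.Icc (0:ℝ) (1/3) ∧ (t+2)/3 ∈ Set.Icc (2/3:ℝ) 1 :=
      ⟨⟨by linarith [hs.1], by linarith [hs.2]⟩, ⟨by linarith [ht.1], by linarith [ht.2]⟩⟩
    have := h (s/3) ⟨by linarith [hs.1], by linarith [hs.2]⟩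
      ((t+2)/3) ⟨by linarith [ht.1], by linarith [ht.2]⟩
    unfold Phi at this
    rw [if_pos hc, if_pos hc] at this
    have e1 : 3*(s/3) = s := by ring
    have e2 : 3*((t+2)/3) - 2 = t := by ring
    rw [e1, e2] at this
    linarith
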